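/- Let A ∈ 𝓡. If F^{n*} ∈ 𝒮*_A for some integer n ≥ 2, and F ∈ 𝓛_A, then F ∈ 𝒮*_A. (Conditional closure of 𝒮*_A with respect to convolution roots.) -/

import Mathlib

open MeasureTheory ProbabilityTheory Filter Set Pointwise Asymptotics

/-- A set `A ⊆ ℝ^d` is increasing if `x ∈ A` and `y ≥ 0` componentwise imply `x + y ∈ A`. -/
def IncreasingSet {d : ℕ} (A : Set (Fin d → ℝ)) : Prop :=
  ∀ x ∈ A, ∀ y : Fin d → ℝ, (∀ i, 0 ≤ y i) → x + y ∈ A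

/-- The family 𝓡 of open increasing sets with convex complement and `0 ∉ closure A`. -/
def MemR {d : ℕ} (A : Set (Fin d → ℝ)) : Prop :=
  IsOpen A ∧ IncreasingSet A ∧ Convex ℝ Aᶜ ∧ (0 : Fin d → ℝ) ∉ closure A

/-- `P[X ∈ x·A]`. -/
noncomputable def probIn {d : ℕ} {Ω : Type*} [MeasurableSpace Ω] (P : Measure Ω)
    (X : Ω → (Fin d → ℝ)) (A : Set (Fin d → ℝ)) (x : ℝ) : ℝ :=
  (P {ω | X ω ∈ x • A}).toReal

/-- `Y_A = sup{u > 0 : X ∈ u·A}`. -/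
noncomputable def YA {d : ℕ} {Ω : Type*} (X : Ω → (Fin d → ℝ)) (A : Set (Fin d → ℝ))
    (ω : Ω) : ℝ :=
  sSup {u : ℝ | 0 < u ∧ X ω ∈ u • A}

/-- The tail of the distribution `F_A` of `Y_A`. -/
noncomputable def tailYA {d : ℕ} {Ω : Type*} [MeasurableSpace Ω] (P : Measure Ω)
    (X : Ω → (Fin d → ℝ)) (A : Set (Fin d → ℝ)) (x : ℝ) : ℝ :=
  (P {ω | x < YA X A ω}).toReal

/-- A (positive) tail function is long-tailed: `T(x−a)/T(x) → 1` for every `a > 0`. -/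
def LongTailedFun (T : ℝ → ℝ) : Prop :=
  (∀ x, 0 < T x) ∧ ∀ a > 0, Tendsto (fun x => T (x - a) / T x) atTop (nhds 1)

/-- The mean `μ_V = ∫₀^∞ V̄(y) dy` computed from the tail function. -/
noncomputable def tailMean (T : ℝ → ℝ) : ℝ := ∫ y in Ioi (0 : ℝ), T y

/-- Strong subexponentiality (class 𝒮*) of a tail function:
`∫₀^x T(x−y)T(y) dy ∼ 2 μ T(x)`, with `μ = ∫₀^∞ T < ∞` and `T > 0`. -/
def StrongSubexpFun (T : ℝ → ℝ) : Prop :=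
  (∀ x, 0 < T x) ∧ IntegrableOn T (Ioi 0) volume ∧
    Tendsto (fun x => (∫ y in (0 : ℝ)..x, T (x - y) * T y) / T x) atTop
      (nhds (2 * tailMean T))

/-- `V̄_u(x) = min(1, ∫_x^{x+u} V̄(y) dy)`. -/
noncomputable def tailU (T : ℝ → ℝ) (u x : ℝ) : ℝ := min 1 (∫ y in x..(x + u), T y)

/-- Strongly subexponential (class 𝒮_*): `V̄_u^{2*}(x)/V̄_u(x) → 2` uniformly in `u ∈ [1,∞)`,
where `V̄_u^{2*}` is the tail of the sum of two independent random variables with tail `V̄_u`. -/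
def StronglySubexpFun (T : ℝ → ℝ) : Prop :=
  (∀ x, 0 < T x) ∧ IntegrableOn T (Ioi 0) volume ∧
    ∀ ε > (0 : ℝ), ∃ x₀ : ℝ, ∀ u ≥ (1 : ℝ), ∀ x ≥ x₀,
      ∀ (Ω' : Type) (_ : MeasurableSpace Ω') (Q : Measure Ω'), IsProbabilityMeasure Q →
        ∀ Z₁ Z₂ : Ω' → ℝ, Measurable Z₁ → Measurable Z₂ → IndepFun Z₁ Z₂ Q →
          (∀ z, (Q {ω | z < Z₁ ω}).toReal = tailU T u z) →
          (∀ z, (Q {ω | z < Z₂ ω}).toReal = tailU T u z) →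
          |(Q {ω | x < Z₁ ω + Z₂ ω}).toReal / tailU T u x - 2| < ε

/-- Insensitivity function of a tail function. -/
def Insensitivity (T : ℝ → ℝ) (h : ℝ → ℝ) : Prop :=
  (∀ x, 0 < h x) ∧ Tendsto h atTop atTop ∧ Tendsto (fun x => h x / x) atTop (nhds 0) ∧
    Tendsto (fun x => T (x - h x) / T x) atTop (nhds 1) ∧
    Tendsto (fun x => T (x + h x) / T x) atTop (nhds 1)

/-- Generalized inverse of `h`. -/
noncomputable def geninv (h : ℝ → ℝ) (y : ℝ) : ℝ := sInf {x | 0 ≤ x ∧ y ≤ h x}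

namespace SP

variable {d : ℕ} {A : Set (Fin d → ℝ)}

noncomputable def yaF (A : Set (Fin d → ℝ)) (w : Fin d → ℝ) : ℝ :=
  sSup {u : ℝ | 0 < u ∧ w ∈ u • A}

lemma YA_eq {Ω : Type*} (X : Ω → (Fin d → ℝ)) (ω : Ω) : YA X A ω = yaF A (X ω) := rfl

lemma yaF_nonneg (w : Fin d → ℝ) : 0 ≤ yaF A w :=
  Real.sSup_nonneg fun _ hx => hx.1.le

lemma memR_ball (hA : MemR A) : ∃ ε > 0, ∀ y ∈ A, ε ≤ ‖y‖ := by
  have h0 := hA.2.2.2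
  rw [Metric.mem_closure_iff] at h0
  push_neg at h0
  obtain ⟨ε, hε, h⟩ := h0
  exact ⟨ε, hε, fun y hy => by simpa [dist_eq_norm] using h y hy⟩

lemma mem_smul_iff {u : ℝ} (hu : 0 < u) (w : Fin d → ℝ) :
    w ∈ u • A ↔ u⁻¹ • w ∈ A :=
  Set.mem_smul_set_iff_inv_smul_mem₀ hu.ne' A w

lemma yaF_bddAbove (hA : MemR A) (w : Fin d → ℝ) :
    BddAbove {u : ℝ | 0 < u ∧ w ∈ u • A} := by
  obtain ⟨ε, hε, h⟩ := memR_ball hA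
  refine ⟨‖w‖ / ε, fun u hu => ?_⟩
  obtain ⟨hu0, hmem⟩ := hu
  rw [mem_smul_iff hu0] at hmem
  have h1 : ε ≤ ‖u⁻¹ • w‖ := h _ hmem
  rw [norm_smul, norm_inv, Real.norm_eq_abs, abs_of_pos hu0] at h1
  rw [le_div_iff₀ hε]
  calc u * ε ≤ u * (u⁻¹ * ‖w‖) := by
        nlinarith
    _ = ‖w‖ := by field_simp
  -- may need fixing

lemma yaF_mem_le (hA : MemR A) {u : ℝ} {w : Fin d → ℝ} (hu : 0 < u) (hw : w ∈ u • A) :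
    u ≤ yaF A w :=
  le_csSup (yaF_bddAbove hA w) ⟨hu, hw⟩

lemma yaF_le {w : Fin d → ℝ} {c : ℝ} (h : ∀ u, 0 < u → w ∈ u • A → u ≤ c) (hc : 0 ≤ c) :
    yaF A w ≤ c :=
  Real.sSup_le (fun u hu => h u hu.1 hu.2) hc

lemma yaF_lt_iff (hA : MemR A) {c : ℝ} (hc : 0 ≤ c) (w : Fin d → ℝ) :
    c < yaF A w ↔ ∃ u, c < u ∧ w ∈ u • A := by
  constructor
  · intro h
    have hne : {u : ℝ | 0 < u ∧ w ∈ u • A}.Nonempty := by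
      by_contra hemp
      rw [Set.not_nonempty_iff_eq_empty] at hemp
      rw [yaF, hemp, Real.sSup_empty] at h
      linarith
    obtain ⟨u, hu, hcu⟩ := exists_lt_of_lt_csSup hne h
    exact ⟨u, hcu, hu.2⟩
  · rintro ⟨u, hcu, hmem⟩
    exact lt_of_lt_of_le hcu (yaF_mem_le hA (lt_of_le_of_lt hc hcu) hmem)

lemma yaF_measurable (hA : MemR A) : Measurable (yaF A) := by
  apply measurable_of_Ioi
  intro c
  rcases lt_or_ge c 0 with hc | hc
  · have : yaF A ⁻¹' Ioi c = univ := by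
      ext w; simp only [mem_preimage, mem_Ioi, mem_univ, iff_true]
      exact lt_of_lt_of_le hc (yaF_nonneg w)
    rw [this]; exact MeasurableSet.univ
  · have : yaF A ⁻¹' Ioi c = ⋃ (u : ℝ) (_ : c < u), u • A := by
      ext w
      simp only [mem_preimage, mem_Ioi, mem_iUnion]
      rw [yaF_lt_iff hA hc]
      tauto
    rw [this]
    have hop : IsOpen (⋃ (u : ℝ) (_ : c < u), u • A) :=
      isOpen_iUnion fun u => isOpen_iUnion fun hu =>
        hA.1.smul₀ (ne_of_gt (lt_of_le_of_lt hc hu))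
    exact hop.measurableSet

lemma yaF_add_nonneg (hA : MemR A) {v : Fin d → ℝ} (hv : ∀ i, 0 ≤ v i) (w : Fin d → ℝ) :
    yaF A w ≤ yaF A (w + v) := by
  apply yaF_le _ (yaF_nonneg _)
  intro u hu hmem
  apply yaF_mem_le hA hu
  rw [mem_smul_iff hu] at hmem ⊢
  rw [smul_add]
  exact hA.2.1 _ hmem _ (fun i => by
    simp only [Pi.smul_apply, smul_eq_mul]
    exact mul_nonneg (inv_nonneg.2 hu.le) (hv i))

lemma yaF_subadd (hA : MemR A) (v w : Fin d → ℝ) :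
    yaF A (v + w) ≤ yaF A v + yaF A w := by
  apply yaF_le _ (add_nonneg (yaF_nonneg v) (yaF_nonneg w))
  intro u hu hmem
  by_contra hlt
  push_neg at hlt
  set α := yaF A v + (u - yaF A v - yaF A w) / 2 with hα
  set β := yaF A w + (u - yaF A v - yaF A w) / 2 with hβ
  have hYv := yaF_nonneg (A := A) v
  have hYw := yaF_nonneg (A := A) w
  have hαpos : 0 < α := by simp only [hα]; linarith
  have hβpos : 0 < β := by simp only [hβ]; linarith
  have hαβ : α + β = u := by simp only [hα, hβ]; ring
  have hvA : α⁻¹ • v ∈ Aᶜ := by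
    intro hmemv
    have : α ≤ yaF A v := yaF_mem_le hA hαpos ((mem_smul_iff hαpos v).2 hmemv)
    simp only [hα] at this; linarith
  have hwA : β⁻¹ • w ∈ Aᶜ := by
    intro hmemw
    have : β ≤ yaF A w := yaF_mem_le hA hβpos ((mem_smul_iff hβpos w).2 hmemw)
    simp only [hβ] at this; linarith
  have hcomb := hA.2.2.1 hvA hwA (le_of_lt (by positivity : (0:ℝ) < α / u))
    (le_of_lt (by positivity : (0:ℝ) < β / u))
    (by field_simp; exact hαβ)
  have h1 : α / u * α⁻¹ = u⁻¹ := by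
    field_simp
  have h2 : β / u * β⁻¹ = u⁻¹ := by
    field_simp
  have heq : (α / u) • (α⁻¹ • v) + (β / u) • (β⁻¹ • w) = u⁻¹ • (v + w) := by
    rw [smul_smul, smul_smul, h1, h2, smul_add]
  rw [heq] at hcomb
  exact hcomb ((mem_smul_iff hu (v + w)).1 hmem)

lemma yaF_zero (hA : MemR A) : yaF A 0 = 0 := by
  have h0A : (0 : Fin d → ℝ) ∉ A := fun h => hA.2.2.2 (subset_closure h)
  have : {u : ℝ | 0 < u ∧ (0 : Fin d → ℝ) ∈ u • A} = ∅ := by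
    ext u
    simp only [mem_setOf_eq, mem_empty_iff_false, iff_false, not_and]
    intro hu hmem
    rw [mem_smul_iff hu, smul_zero] at hmem
    exact h0A hmem
  rw [yaF, this, Real.sSup_empty]

lemma yaF_sum_le (hA : MemR A) {ι : Type*} (s : Finset ι) (g : ι → Fin d → ℝ) :
    yaF A (∑ i ∈ s, g i) ≤ ∑ i ∈ s, yaF A (g i) := by
  induction s using Finset.cons_induction with
  | empty => simp [yaF_zero hA]
  | cons a s ha ih =>
    rw [Finset.sum_cons, Finset.sum_cons]
    exact le_trans (yaF_subadd hA _ _) (by linarith [ih])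



variable {G : ℝ → ℝ}

lemma intInt_of_bdd {f : ℝ → ℝ} (hm : Measurable f) (h0 : ∀ y, 0 ≤ f y) (h1 : ∀ y, f y ≤ 1)
    (a b : ℝ) : IntervalIntegrable f volume a b := by
  have key : ∀ (a b : ℝ), IntegrableOn f (Set.Ioc a b) volume := by
    intro a b
    apply Integrable.mono' (g := fun _ => (1:ℝ))
      ((integrableOn_const_iff).mpr (Or.inr measure_Ioc_lt_top))
      hm.aestronglyMeasurable.restrict
    exact ae_of_all _ fun y => by
      rw [Real.norm_eq_abs, abs_of_nonneg (h0 y)]; exact h1 y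
  exact ⟨key a b, key b a⟩

section Bdd

variable (hmono : Antitone G) (hpos : ∀ x, 0 < G x) (hb1 : ∀ x, G x ≤ 1)

include hmono hpos hb1

lemma G_meas : Measurable G := hmono.measurable

lemma intInt_conv (c a b : ℝ) :
    IntervalIntegrable (fun y => G (c - y) * G y) volume a b := by
  apply intInt_of_bdd
  · exact ((G_meas hmono hpos hb1).comp (measurable_const.sub measurable_id)).mul
      (G_meas hmono hpos hb1)
  · exact fun y => mul_nonneg (hpos _).le (hpos _).le
  · exact fun y => mul_le_one₀ (hb1 _) (hpos _).le (hb1 _)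

lemma intInt_conv' (c a b : ℝ) :
    IntervalIntegrable (fun y => G y * G (c - y)) volume a b := by
  apply intInt_of_bdd
  · exact (G_meas hmono hpos hb1).mul
      ((G_meas hmono hpos hb1).comp (measurable_const.sub measurable_id))
  · exact fun y => mul_nonneg (hpos _).le (hpos _).le
  · exact fun y => mul_le_one₀ (hb1 _) (hpos _).le (hb1 _)

/-- reflection: `∫_a^b G(x-y)G(y) dy = ∫_{x-b}^{x-a} G(x-y)G(y) dy`. -/
lemma conv_reflect (x a b : ℝ) :
    ∫ y in a..b, G (x - y) * G y = ∫ y in (x-b)..(x-a), G (x - y) * G y := by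
  have h := intervalIntegral.integral_comp_sub_left (a := a) (b := b)
    (fun z => G z * G (x - z)) x
  calc ∫ y in a..b, G (x - y) * G y
      = ∫ y in a..b, (fun z => G z * G (x - z)) (x - y) := by
        apply intervalIntegral.integral_congr
        intro y _; simp only []; ring_nf
    _ = ∫ z in (x-b)..(x-a), G z * G (x - z) := h
    _ = ∫ y in (x-b)..(x-a), G (x - y) * G y := by
        apply intervalIntegral.integral_congr
        intro y _; simp only []; ring

/-- symmetric split of the convolution integral -/
lemma conv_sym (x : ℝ) :
    ∫ y in (0:ℝ)..x, G (x - y) * G y = 2 * ∫ y in (0:ℝ)..(x/2), G (x - y) * G y := by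
  have h1 : ∫ y in (0:ℝ)..x, G (x - y) * G y
      = (∫ y in (0:ℝ)..(x/2), G (x - y) * G y) + ∫ y in (x/2)..x, G (x - y) * G y :=
    (intervalIntegral.integral_add_adjacent_intervals
      (intInt_conv hmono hpos hb1 x 0 (x/2)) (intInt_conv hmono hpos hb1 x (x/2) x)).symm
  have h2 : ∫ y in (x/2)..x, G (x - y) * G y = ∫ y in (0:ℝ)..(x/2), G (x - y) * G y := by
    rw [conv_reflect hmono hpos hb1 x (x/2) x, show x - x = (0:ℝ) by ring,
      show x - x/2 = x/2 by ring]
  rw [h1, h2]; ring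

/-- `∫_0^c G(x-y)G(y) dy ≥ G(x) * ∫_0^c G` for `0 ≤ c ≤ x`. -/
lemma conv_head_lower {c x : ℝ} (hc : 0 ≤ c) (hcx : c ≤ x) :
    G x * ∫ y in (0:ℝ)..c, G y ≤ ∫ y in (0:ℝ)..c, G (x - y) * G y := by
  rw [← intervalIntegral.integral_const_mul]
  apply intervalIntegral.integral_mono_on hc
    (intInt_of_bdd ((measurable_const.mul (G_meas hmono hpos hb1)))
      (fun y => mul_nonneg (hpos _).le (hpos _).le)
      (fun y => mul_le_one₀ (hb1 _) (hpos _).le (hb1 _)) _ _)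
    (intInt_conv hmono hpos hb1 x 0 c)
  intro y hy
  exact mul_le_mul_of_nonneg_right (hmono (by linarith [hy.1] : x - y ≤ x)) (hpos _).le

/-- tail-split: `∫_c^{x-c} G(x-y)G(y) dy ≤ I(x) - 2 G(x) ∫_0^c G`. -/
lemma conv_tail_split {c x : ℝ} (hc : 0 ≤ c) (hcx : 2*c ≤ x) :
    ∫ y in c..(x-c), G (x - y) * G y
      ≤ (∫ y in (0:ℝ)..x, G (x - y) * G y) - 2 * (G x * ∫ y in (0:ℝ)..c, G y) := by
  have key : (∫ y in (0:ℝ)..x, G (x - y) * G y)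
      = (∫ y in (0:ℝ)..c, G (x - y) * G y) + (∫ y in c..(x-c), G (x - y) * G y)
        + ∫ y in (x-c)..x, G (x - y) * G y := by
    rw [intervalIntegral.integral_add_adjacent_intervals
      (intInt_conv hmono hpos hb1 x 0 c) (intInt_conv hmono hpos hb1 x c (x-c)),
      intervalIntegral.integral_add_adjacent_intervals
      (intInt_conv hmono hpos hb1 x 0 (x-c)) (intInt_conv hmono hpos hb1 x (x-c) x)]
  have h3 : ∫ y in (x-c)..x, G (x - y) * G y = ∫ y in (0:ℝ)..c, G (x - y) * G y := by
    rw [conv_reflect hmono hpos hb1 x (x-c) x]; norm_num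
  have h4 := conv_head_lower hmono hpos hb1 (c := c) (x := x) hc (by linarith)
  rw [key, h3]; linarith

/-- `∫_a^b G(x-y)G(y) dy ≥ G(x-a) * ∫_a^b G`. -/
lemma conv_lower₂ {a b x : ℝ} (hab : a ≤ b) :
    G (x - a) * ∫ y in a..b, G y ≤ ∫ y in a..b, G (x - y) * G y := by
  rw [← intervalIntegral.integral_const_mul]
  apply intervalIntegral.integral_mono_on hab
    (intInt_of_bdd ((measurable_const.mul (G_meas hmono hpos hb1)))
      (fun y => mul_nonneg (hpos _).le (hpos _).le)
      (fun y => mul_le_one₀ (hb1 _) (hpos _).le (hb1 _)) _ _)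
    (intInt_conv hmono hpos hb1 x a b)
  intro y hy
  exact mul_le_mul_of_nonneg_right (hmono (by linarith [hy.1] : x - y ≤ x - a)) (hpos _).le

/-- `∫_a^b G(x-y)G(y) dy ≤ G(x-b) * ∫_a^b G`. -/
lemma conv_upper {a b x : ℝ} (hab : a ≤ b) :
    ∫ y in a..b, G (x - y) * G y ≤ G (x - b) * ∫ y in a..b, G y := by
  rw [← intervalIntegral.integral_const_mul]
  apply intervalIntegral.integral_mono_on hab
    (intInt_conv hmono hpos hb1 x a b)
    (intInt_of_bdd ((measurable_const.mul (G_meas hmono hpos hb1)))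
      (fun y => mul_nonneg (hpos _).le (hpos _).le)
      (fun y => mul_le_one₀ (hb1 _) (hpos _).le (hb1 _)) _ _)
  intro y hy
  exact mul_le_mul_of_nonneg_right (hmono (by linarith [hy.2] : x - b ≤ x - y)) (hpos _).le

end Bdd

section Main

variable (hmono : Antitone G) (hpos : ∀ x, 0 < G x) (hb1 : ∀ x, G x ≤ 1)
  (hint : IntegrableOn G (Ioi 0) volume)

include hmono hpos hb1 hint

omit hmono hpos hb1 in
lemma head_tendsto : Tendsto (fun c => ∫ y in (0:ℝ)..c, G y) atTop (nhds (tailMean G)) :=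
  intervalIntegral_tendsto_integral_Ioi 0 hint tendsto_id

omit hmono hb1 in
lemma head_le_mean (c : ℝ) : (∫ y in (0:ℝ)..c, G y) ≤ tailMean G := by
  have hmean0 : 0 ≤ tailMean G :=
    setIntegral_nonneg measurableSet_Ioi (fun y _ => (hpos y).le)
  rcases le_or_gt c 0 with hc | hc
  · have : (∫ y in (0:ℝ)..c, G y) ≤ 0 := by
      rw [intervalIntegral.integral_symm]
      simp only [neg_nonpos]
      exact intervalIntegral.integral_nonneg hc (fun u _ => (hpos u).le)
    linarith
  · rw [intervalIntegral.integral_of_le hc.le]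
    exact setIntegral_mono_set hint (ae_of_all _ (fun y => (hpos y).le))
      (HasSubset.Subset.eventuallyLE Ioc_subset_Ioi_self)

omit hint in
lemma int_pos {a b : ℝ} (hab : a < b) : 0 < ∫ y in a..b, G y := by
  have h1 : (b - a) * G b ≤ ∫ y in a..b, G y := by
    have := intervalIntegral.integral_mono_on (f := fun _ => G b) (g := G) hab.le
      (intervalIntegrable_const)
      (intInt_of_bdd (G_meas hmono hpos hb1) (fun y => (hpos _).le) hb1 a b)
      (fun y hy => hmono hy.2)
    simpa using this
  nlinarith [hpos b]

lemma mean_pos : 0 < tailMean G :=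
  lt_of_lt_of_le (int_pos hmono hpos hb1 (by norm_num : (0:ℝ) < 1))
    (head_le_mean hpos hint 1)

/-- 𝒮* (as a function condition, with antitone G) implies long-tailedness. -/
lemma long_of_sstar
    (htend : Tendsto (fun x => (∫ y in (0:ℝ)..x, G (x - y) * G y) / G x) atTop
      (nhds (2 * tailMean G))) {a : ℝ} (ha : 0 < a) :
    Tendsto (fun x => G (x - a) / G x) atTop (nhds 1) := by
  set μ := tailMean G with hμdef
  set m := μ - ∫ y in (0:ℝ)..a, G y with hmdef
  have hm : 0 < m := by
    have h1 : (∫ y in (0:ℝ)..(a+1), G y) ≤ μ := head_le_mean hpos hint _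
    have h2 : (∫ y in (0:ℝ)..a, G y) + (∫ y in a..(a+1), G y)
        = ∫ y in (0:ℝ)..(a+1), G y :=
      intervalIntegral.integral_add_adjacent_intervals
        (intInt_of_bdd (G_meas hmono hpos hb1) (fun y => (hpos _).le) hb1 _ _)
        (intInt_of_bdd (G_meas hmono hpos hb1) (fun y => (hpos _).le) hb1 _ _)
    have h3 : 0 < ∫ y in a..(a+1), G y := int_pos hmono hpos hb1 (by linarith)
    rw [hmdef]; linarith
  rw [Metric.tendsto_atTop]
  intro ε hε
  set δ := min (ε * m / 8) (m / 2) with hδdef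
  have hδpos : 0 < δ := lt_min (by positivity) (by positivity)
  have hδm : δ ≤ m/2 := min_le_right _ _
  have hδε : δ ≤ ε*m/8 := min_le_left _ _
  have F1 : ∀ᶠ x in atTop, (∫ y in (0:ℝ)..x, G (x - y) * G y) ≤ (2*μ + δ) * G x := by
    filter_upwards [htend.eventually (eventually_le_nhds (by linarith : 2*μ < 2*μ + δ))]
      with x hx
    rw [div_le_iff₀ (hpos x)] at hx
    exact hx
  have F2 : ∀ᶠ x in atTop, m - δ ≤ ∫ y in a..(x/2), G y := by
    have hcomp : Tendsto (fun x : ℝ => ∫ y in (0:ℝ)..(x/2), G y) atTop (nhds μ) :=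
      (head_tendsto hint).comp (tendsto_id.atTop_div_const two_pos)
    filter_upwards [hcomp.eventually (eventually_ge_nhds (by linarith : μ - δ < μ)),
      eventually_ge_atTop (2*a)] with x hx1 hx2
    have hax : a ≤ x/2 := by linarith
    have h2 : (∫ y in (0:ℝ)..a, G y) + (∫ y in a..(x/2), G y) = ∫ y in (0:ℝ)..(x/2), G y :=
      intervalIntegral.integral_add_adjacent_intervals
        (intInt_of_bdd (G_meas hmono hpos hb1) (fun y => (hpos _).le) hb1 _ _)
        (intInt_of_bdd (G_meas hmono hpos hb1) (fun y => (hpos _).le) hb1 _ _)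
    rw [hmdef]; linarith
  rw [← eventually_atTop]
  filter_upwards [F1, F2, eventually_ge_atTop (2*a)] with x hx1 hx2 hx3
  have hax : a ≤ x/2 := by linarith
  have hr1 : 1 ≤ G (x - a) / G x := by
    rw [le_div_iff₀ (hpos x), one_mul]
    exact hmono (by linarith)
  have hsym := conv_sym hmono hpos hb1 x
  have hsplit : (∫ y in (0:ℝ)..a, G (x - y) * G y) + (∫ y in a..(x/2), G (x - y) * G y)
      = ∫ y in (0:ℝ)..(x/2), G (x - y) * G y :=
    intervalIntegral.integral_add_adjacent_intervals
      (intInt_conv hmono hpos hb1 x 0 a) (intInt_conv hmono hpos hb1 x a (x/2))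
  have hlow1 : G x * ∫ y in (0:ℝ)..a, G y ≤ ∫ y in (0:ℝ)..a, G (x - y) * G y :=
    conv_head_lower hmono hpos hb1 (c := a) (x := x) ha.le (by linarith)
  have hlow2 : G (x - a) * ∫ y in a..(x/2), G y ≤ ∫ y in a..(x/2), G (x - y) * G y :=
    conv_lower₂ hmono hpos hb1 hax
  have hGxa : G (x - a) * (m - δ) ≤ G x * (m + δ) := by
    have step : G (x - a) * (m - δ) ≤ G (x - a) * ∫ y in a..(x/2), G y :=
      mul_le_mul_of_nonneg_left hx2 (hpos _).le
    nlinarith [hpos x, hpos (x - a)]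
  have hrle : G (x - a) / G x ≤ (m + δ) / (m - δ) := by
    rw [div_le_div_iff₀ (hpos x) (by linarith : (0:ℝ) < m - δ)]
    linarith
  have hfinal : G (x - a) / G x - 1 ≤ ε / 2 := by
    have h1 : (m + δ) / (m - δ) ≤ 1 + ε/2 := by
      rw [div_le_iff₀ (by linarith : (0:ℝ) < m - δ)]
      nlinarith
    linarith
  rw [Real.dist_eq, abs_of_nonneg (by linarith)]
  linarith

/-- the tail of the convolution integral is small -/
lemma conv_tail_small
    (htend : Tendsto (fun x => (∫ y in (0:ℝ)..x, G (x - y) * G y) / G x) atTop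
      (nhds (2 * tailMean G))) :
    ∀ δ > (0:ℝ), ∃ c₀ : ℝ, 1 ≤ c₀ ∧ ∀ c ≥ c₀, ∀ᶠ x in atTop,
      (∫ y in c..(x - c), G (x - y) * G y) ≤ δ * G x := by
  intro δ hδ
  set μ := tailMean G with hμdef
  obtain ⟨N, hN⟩ := eventually_atTop.mp
    ((head_tendsto hint).eventually (eventually_ge_nhds (by linarith : μ - δ/4 < μ)))
  refine ⟨max N 1, le_max_right _ _, fun c hc => ?_⟩
  have hc1 : 1 ≤ c := le_trans (le_max_right _ _) hc
  have hcN : μ - δ/4 ≤ ∫ y in (0:ℝ)..c, G y := hN c (le_trans (le_max_left _ _) hc)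
  have F1 : ∀ᶠ x in atTop, (∫ y in (0:ℝ)..x, G (x - y) * G y) ≤ (2*μ + δ/2) * G x := by
    filter_upwards [htend.eventually (eventually_le_nhds (by linarith : 2*μ < 2*μ + δ/2))]
      with x hx
    rw [div_le_iff₀ (hpos x)] at hx
    exact hx
  filter_upwards [F1, eventually_ge_atTop (2*c)] with x hx1 hx2
  have key := conv_tail_split hmono hpos hb1 (c := c) (x := x) (by linarith) hx2
  have : (∫ y in c..(x-c), G (x - y) * G y) ≤ (2*μ + δ/2) * G x - 2 * (G x * (μ - δ/4)) := by
    have step : G x * (μ - δ/4) ≤ G x * ∫ y in (0:ℝ)..c, G y :=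
      mul_le_mul_of_nonneg_left hcN (hpos _).le
    linarith
  calc (∫ y in c..(x-c), G (x - y) * G y)
      ≤ (2*μ + δ/2) * G x - 2 * (G x * (μ - δ/4)) := this
    _ = δ * G x := by ring

end Main

end SP

set_option maxHeartbeats 2000000 in
/-- Conditional closure of `𝒮*_A` under convolution roots: if `F^{n*} ∈ 𝒮*_A` for some
`n ≥ 2` and `F ∈ 𝓛_A`, then `F ∈ 𝒮*_A`. -/
theorem statement7 {d : ℕ} (A : Set (Fin d → ℝ)) (hA : MemR A)
    {Ω : Type*} [MeasurableSpace Ω] (P : Measure Ω) [IsProbabilityMeasure P]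
    (X : ℕ → Ω → (Fin d → ℝ)) (hmeas : ∀ i, Measurable (X i))
    (hpos : ∀ i ω j, 0 ≤ X i ω j)
    (hindep : iIndepFun X P)
    (hident : ∀ i, IdentDistrib (X i) (X 0) P P)
    (n : ℕ) (hn : 2 ≤ n)
    (hconv : StrongSubexpFun (tailYA P (fun ω => ∑ i ∈ Finset.range n, X i ω) A))
    (hlong : LongTailedFun (tailYA P (X 0) A)) :
    StrongSubexpFun (tailYA P (X 0) A) := by
  classical
  set T : ℝ → ℝ := tailYA P (X 0) A with hT_def
  set G : ℝ → ℝ := tailYA P (fun ω => ∑ i ∈ Finset.range n, X i ω) A with hG_def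
  set Y : ℕ → Ω → ℝ := fun j ω => SP.yaF A (X j ω) with hY_def
  set S : Ω → ℝ := fun ω => SP.yaF A (∑ i ∈ Finset.range n, X i ω) with hS_def
  set S' : ℕ → Ω → ℝ := fun j ω => SP.yaF A (∑ i ∈ (Finset.range n).erase j, X i ω)
    with hS'_def
  have hn0 : 0 < n := by omega
  have hyaF_meas : Measurable (SP.yaF A) := SP.yaF_measurable hA
  have hYmeas : ∀ j, Measurable (Y j) := fun j => hyaF_meas.comp (hmeas j)
  have hsum_meas : Measurable (fun ω => ∑ i ∈ Finset.range n, X i ω) :=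
    Finset.measurable_sum _ (fun i _ => hmeas i)
  have hSmeas : Measurable S := hyaF_meas.comp hsum_meas
  have hS'meas : ∀ j, Measurable (S' j) := fun j =>
    hyaF_meas.comp (Finset.measurable_sum _ (fun i _ => hmeas i))
  have hT : ∀ z, T z = (P {ω | z < Y 0 ω}).toReal := fun z => rfl
  have hG : ∀ z, G z = (P {ω | z < S ω}).toReal := fun z => rfl
  -- identical distribution of the Y's
  have hTj : ∀ (j : ℕ) (z : ℝ), (P {ω | z < Y j ω}).toReal = T z := by
    intro j z
    have hid : IdentDistrib (Y j) (Y 0) P P := (hident j).comp hyaF_meas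
    have h2 := hid.measure_mem_eq (measurableSet_Ioi (a := z))
    rw [hT]
    congr 1
  -- basic real-probability tools
  have prmono : ∀ {E F : Set Ω}, E ⊆ F → (P E).toReal ≤ (P F).toReal := by
    intro E F h
    exact ENNReal.toReal_mono (measure_ne_top P _) (measure_mono h)
  have prsum : ∀ (t : Finset ℕ) (E : ℕ → Set Ω),
      (P (⋃ j ∈ t, E j)).toReal ≤ ∑ j ∈ t, (P (E j)).toReal := by
    intro t E
    calc (P (⋃ j ∈ t, E j)).toReal ≤ (∑ j ∈ t, P (E j)).toReal := by
          apply ENNReal.toReal_mono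
          · exact (ENNReal.sum_lt_top.mpr (fun a _ => measure_lt_top P _)).ne
          · exact measure_biUnion_finset_le t E
      _ = ∑ j ∈ t, (P (E j)).toReal := ENNReal.toReal_sum (fun a _ => measure_ne_top P _)
  have prunion : ∀ (E F : Set Ω), (P (E ∪ F)).toReal ≤ (P E).toReal + (P F).toReal := by
    intro E F
    calc (P (E ∪ F)).toReal ≤ (P E + P F).toReal :=
          ENNReal.toReal_mono (by simp [ENNReal.add_ne_top, measure_ne_top]) (measure_union_le E F)
      _ = (P E).toReal + (P F).toReal :=
          ENNReal.toReal_add (measure_ne_top P _) (measure_ne_top P _)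
  -- monotonicity and bounds for the tails
  have hTanti : Antitone T := by
    intro z z' h
    rw [hT, hT]
    exact prmono (fun ω hω => lt_of_le_of_lt h hω)
  have hGanti : Antitone G := by
    intro z z' h
    rw [hG, hG]
    exact prmono (fun ω hω => lt_of_le_of_lt h hω)
  have hT1 : ∀ z, T z ≤ 1 := by
    intro z; rw [hT]
    calc (P {ω | z < Y 0 ω}).toReal ≤ (1 : ENNReal).toReal :=
          ENNReal.toReal_mono ENNReal.one_ne_top prob_le_one
      _ = 1 := by simp
  have hG1 : ∀ z, G z ≤ 1 := by
    intro z; rw [hG]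
    calc (P {ω | z < S ω}).toReal ≤ (1 : ENNReal).toReal :=
          ENNReal.toReal_mono ENNReal.one_ne_top prob_le_one
      _ = 1 := by simp
  have hTpos : ∀ z, 0 < T z := hlong.1
  have hGpos : ∀ z, 0 < G z := hconv.1
  have hGint : IntegrableOn G (Ioi 0) volume := hconv.2.1
  have hGtend := hconv.2.2
  -- pointwise comparisons between the random variables
  have hYS : ∀ j ∈ Finset.range n, ∀ ω, Y j ω ≤ S ω := by
    intro j hj ω
    have hsum : ∑ i ∈ Finset.range n, X i ω
        = X j ω + ∑ i ∈ (Finset.range n).erase j, X i ω :=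
      (Finset.add_sum_erase _ _ hj).symm
    simp only [hY_def, hS_def, hsum]
    apply SP.yaF_add_nonneg hA
    intro i
    simp only [Finset.sum_apply]
    exact Finset.sum_nonneg (fun k _ => hpos k ω i)
  have hS'S : ∀ j ∈ Finset.range n, ∀ ω, S' j ω ≤ S ω := by
    intro j hj ω
    have hsum : ∑ i ∈ Finset.range n, X i ω
        = (∑ i ∈ (Finset.range n).erase j, X i ω) + X j ω :=
      (Finset.sum_erase_add _ _ hj).symm
    simp only [hS'_def, hS_def, hsum]
    apply SP.yaF_add_nonneg hA
    intro i
    exact hpos j ω i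
  have hSsub : ∀ j ∈ Finset.range n, ∀ ω, S ω ≤ Y j ω + S' j ω := by
    intro j hj ω
    have hsum : ∑ i ∈ Finset.range n, X i ω
        = X j ω + ∑ i ∈ (Finset.range n).erase j, X i ω :=
      (Finset.add_sum_erase _ _ hj).symm
    simp only [hY_def, hS_def, hS'_def, hsum]
    exact SP.yaF_subadd hA _ _
  have hSsum : ∀ ω, S ω ≤ ∑ j ∈ Finset.range n, Y j ω := by
    intro ω
    simp only [hY_def, hS_def]
    exact SP.yaF_sum_le hA _ _
  have hTG : ∀ z, T z ≤ G z := by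
    intro z
    rw [hT, hG]
    exact prmono (fun ω hω => lt_of_lt_of_le hω
      (hYS 0 (Finset.mem_range.mpr hn0) ω))
  have hT0 : ∀ z, 0 ≤ T z := fun z => (hTpos z).le
  -- independence
  have hindepYS' : ∀ j, IndepFun (Y j) (S' j) P := by
    intro j
    have h1 : IndepFun (∑ i ∈ (Finset.range n).erase j, X i) (X j) P :=
      hindep.indepFun_finset_sum_of_notMem hmeas (Finset.notMem_erase j _)
    have h2 : IndepFun (S' j) (Y j) P := by
      have h3 := h1.comp hyaF_meas hyaF_meas
      have he : (SP.yaF A) ∘ (∑ i ∈ (Finset.range n).erase j, X i) = S' j := by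
        funext ω
        simp only [Function.comp_apply, hS'_def, Finset.sum_apply]
      have he2 : (SP.yaF A) ∘ (X j) = Y j := rfl
      rwa [he, he2] at h3
    exact h2.symm
  -- probability of a slice of Y j
  have hslice : ∀ (j : ℕ) (k : ℕ),
      (P (Y j ⁻¹' (Ioc (k:ℝ) ((k:ℝ)+1)))).toReal = T k - T ((k:ℝ)+1) := by
    intro j k
    have hdiff : Y j ⁻¹' (Ioc (k:ℝ) ((k:ℝ)+1))
        = (Y j ⁻¹' (Ioi (k:ℝ))) \ (Y j ⁻¹' (Ioi ((k:ℝ)+1))) := by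
      ext ω
      simp only [mem_preimage, mem_Ioc, mem_Ioi, mem_diff, not_lt]
    have hsub : Y j ⁻¹' (Ioi ((k:ℝ)+1)) ⊆ Y j ⁻¹' (Ioi (k:ℝ)) := by
      intro ω hω
      simp only [mem_preimage, mem_Ioi] at hω ⊢
      linarith
    rw [hdiff, measure_diff hsub ((hYmeas j measurableSet_Ioi).nullMeasurableSet)
      (measure_ne_top P _),
      ENNReal.toReal_sub_of_le (measure_mono hsub) (measure_ne_top P _)]
    have e1 : (P (Y j ⁻¹' (Ioi (k:ℝ)))).toReal = T k := hTj j k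
    have e2 : (P (Y j ⁻¹' (Ioi ((k:ℝ)+1)))).toReal = T ((k:ℝ)+1) := hTj j _
    rw [e1, e2]
  -- convenient integrability facts
  have hGmeas : Measurable G := hGanti.measurable
  have hGconvInt : ∀ (c a b : ℝ), IntervalIntegrable (fun y => G (c - y) * G y) volume a b :=
    fun c a b => SP.intInt_conv hGanti hGpos hG1 c a b
  have hGInt1 : ∀ (a b : ℝ), IntervalIntegrable G volume a b :=
    fun a b => SP.intInt_of_bdd hGmeas (fun y => (hGpos y).le) hG1 a b
  have hunit : ∀ k : ℝ, G k ≤ ∫ y in (k-1)..k, G y := by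
    intro k
    have h := intervalIntegral.integral_mono_on (f := fun _ => G k) (g := G)
      (by linarith : k - 1 ≤ k) intervalIntegrable_const (hGInt1 _ _)
      (fun y hy => hGanti hy.2)
    rw [intervalIntegral.integral_const] at h
    have e : k - (k-1) = (1:ℝ) := by ring
    rw [e, one_smul] at h
    exact h
  -- Step A : decomposition of the event {x < S}
  have stepA : ∀ (s : ℕ), 1 ≤ s → ∀ x : ℝ, (n:ℝ)*s < x →
      G x ≤ (n:ℝ) * T (x - ((n:ℝ)-1)*s) + ∑ j ∈ Finset.range n,
        (P ({ω | (s:ℝ) < Y j ω ∧ Y j ω ≤ x - ((n:ℝ)-1)*s}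
          ∩ {ω | x - Y j ω < S' j ω})).toReal := by
    intro s hs x hx
    set U1 : Set Ω := ⋃ j ∈ Finset.range n, {ω | x - ((n:ℝ)-1)*s < Y j ω} with hU1
    set E : ℕ → Set Ω := fun j => {ω | (s:ℝ) < Y j ω ∧ Y j ω ≤ x - ((n:ℝ)-1)*s}
          ∩ {ω | x - Y j ω < S' j ω} with hE
    set U2 : Set Ω := ⋃ j ∈ Finset.range n, E j with hU2
    have hcover : {ω | x < S ω} ⊆ U1 ∪ U2 := by
      intro ω hω
      simp only [mem_setOf_eq] at hω
      by_cases hbig : ∃ j ∈ Finset.range n, x - ((n:ℝ)-1)*s < Y j ω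
      · obtain ⟨j, hj, hjs⟩ := hbig
        exact Or.inl (mem_biUnion hj hjs)
      · push_neg at hbig
        have hex : ∃ j ∈ Finset.range n, (s:ℝ) < Y j ω := by
          by_contra hall
          push_neg at hall
          have hsum2 : ∑ j ∈ Finset.range n, Y j ω ≤ (n:ℝ)*s := by
            calc ∑ j ∈ Finset.range n, Y j ω ≤ ∑ _j ∈ Finset.range n, (s:ℝ) :=
                  Finset.sum_le_sum (fun j hj => (hall j hj))
              _ = (n:ℝ)*s := by simp [mul_comm]
          have := hSsum ω
          linarith
        obtain ⟨j, hj, hjs⟩ := hex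
        refine Or.inr (mem_biUnion hj ⟨⟨hjs, hbig j hj⟩, ?_⟩)
        have := hSsub j hj ω
        simp only [mem_setOf_eq]
        linarith
    have h1 : G x ≤ (P U1).toReal + (P U2).toReal := by
      rw [hG]
      exact le_trans (prmono hcover) (prunion _ _)
    have h2 : (P U1).toReal ≤ (n:ℝ) * T (x - ((n:ℝ)-1)*s) := by
      apply le_trans (prsum (Finset.range n) _)
      have he : ∀ j ∈ Finset.range n,
          (P {ω | x - ((n:ℝ)-1)*s < Y j ω}).toReal = T (x - ((n:ℝ)-1)*s) :=
        fun j _ => hTj j _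
      rw [Finset.sum_congr rfl he, Finset.sum_const, Finset.card_range, nsmul_eq_mul]
    have h3 : (P U2).toReal ≤ ∑ j ∈ Finset.range n, (P (E j)).toReal :=
      prsum (Finset.range n) E
    simp only [hE] at h3
    linarith
  -- Step B : slicing each event by the integer part of Y j
  have stepB : ∀ (s : ℕ), 1 ≤ s → ∀ x : ℝ, ∀ j ∈ Finset.range n,
      (P ({ω | (s:ℝ) < Y j ω ∧ Y j ω ≤ x - ((n:ℝ)-1)*s}
        ∩ {ω | x - Y j ω < S' j ω})).toReal
      ≤ ∑ k ∈ Finset.Ico s (⌊x - ((n:ℝ)-1)*(s:ℝ)⌋₊ + 1),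
          (T k - T ((k:ℝ)+1)) * G (x - (k:ℝ) - 1) := by
    intro s hs x j hjn
    set K := ⌊x - ((n:ℝ)-1)*(s:ℝ)⌋₊ with hK
    have hcov : {ω | (s:ℝ) < Y j ω ∧ Y j ω ≤ x - ((n:ℝ)-1)*s}
          ∩ {ω | x - Y j ω < S' j ω}
        ⊆ ⋃ k ∈ Finset.Ico s (K+1),
            ((Y j ⁻¹' (Ioc (k:ℝ) ((k:ℝ)+1))) ∩ (S' j ⁻¹' (Ioi (x - (k:ℝ) - 1)))) := by
      rintro ω ⟨⟨h1, h2⟩, h3⟩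
      simp only [mem_setOf_eq] at h1 h2 h3
      have hy0 : (0:ℝ) < Y j ω := lt_of_le_of_lt (Nat.cast_nonneg s) h1
      have hceil1 : 1 ≤ ⌈Y j ω⌉₊ := Nat.one_le_ceil_iff.mpr hy0
      set k := ⌈Y j ω⌉₊ - 1 with hk2
      have hkc : (k:ℝ) = (⌈Y j ω⌉₊:ℝ) - 1 := by
        rw [hk2, Nat.cast_sub hceil1, Nat.cast_one]
      have hky : (k:ℝ) < Y j ω := by
        have := Nat.ceil_lt_add_one hy0.le
        rw [hkc]; linarith
      have hyk1 : Y j ω ≤ (k:ℝ)+1 := by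
        have := Nat.le_ceil (Y j ω)
        rw [hkc]; linarith
      have hks : s ≤ k := by
        have hc2 : (s:ℝ) < ((k+1:ℕ):ℝ) := by push_cast; linarith
        exact Nat.lt_succ_iff.mp (Nat.cast_lt.mp hc2)
      have hkK : k < K + 1 := by
        apply Nat.lt_succ_of_le
        apply Nat.le_floor
        linarith
      apply mem_biUnion (Finset.mem_Ico.mpr ⟨hks, hkK⟩)
      refine ⟨⟨hky, hyk1⟩, ?_⟩
      simp only [mem_preimage, mem_Ioi]
      linarith
    apply le_trans (le_trans (prmono hcov) (prsum _ _))
    apply Finset.sum_le_sum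
    intro k _
    have hprodk : (P ((Y j ⁻¹' (Ioc (k:ℝ) ((k:ℝ)+1))) ∩ (S' j ⁻¹' (Ioi (x - (k:ℝ) - 1)))))
        = P (Y j ⁻¹' (Ioc (k:ℝ) ((k:ℝ)+1))) * P (S' j ⁻¹' (Ioi (x - (k:ℝ) - 1))) :=
      (hindepYS' j).measure_inter_preimage_eq_mul _ _ measurableSet_Ioc measurableSet_Ioi
    rw [hprodk, ENNReal.toReal_mul, hslice j k]
    apply mul_le_mul_of_nonneg_left
    · have hsub2 : S' j ⁻¹' (Ioi (x - (k:ℝ) - 1)) ⊆ {ω | x - (k:ℝ) - 1 < S ω} := by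
        intro ω hω
        simp only [mem_preimage, mem_Ioi] at hω
        exact lt_of_lt_of_le hω (hS'S j hjn ω)
      rw [hG]
      exact prmono hsub2
    · have := hTanti (by linarith : (k:ℝ) ≤ (k:ℝ)+1)
      linarith
  -- Step C : from the sum to an integral
  have stepC : ∀ (s : ℕ), 4 ≤ s → ∀ x : ℝ, (n:ℝ)*s < x →
      ∑ k ∈ Finset.Ico s (⌊x - ((n:ℝ)-1)*(s:ℝ)⌋₊ + 1),
          (T k - T ((k:ℝ)+1)) * G (x - (k:ℝ) - 1)
        ≤ ∫ y in ((s:ℝ)-3)..((x-2) - ((s:ℝ)-3)), G ((x-2) - y) * G y := by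
    intro s hs4 x hx
    have hs0 : (1:ℝ) ≤ (s:ℝ) := by exact_mod_cast Nat.one_le_iff_ne_zero.mpr (by omega)
    have hns : 2*(s:ℝ) ≤ (n:ℝ)*s := by
      have h2n : (2:ℝ) ≤ (n:ℝ) := by exact_mod_cast hn
      nlinarith
    set K := ⌊x - ((n:ℝ)-1)*(s:ℝ)⌋₊ with hK
    have hKle : (K:ℝ) ≤ x - ((n:ℝ)-1)*(s:ℝ) := by
      apply Nat.floor_le
      have h2n : (2:ℝ) ≤ (n:ℝ) := by exact_mod_cast hn
      nlinarith
    have hKx : (K:ℝ) ≤ x - (s:ℝ) := by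
      have h2n : (2:ℝ) ≤ (n:ℝ) := by exact_mod_cast hn
      nlinarith
    -- termwise bound
    have hterm : ∀ k ∈ Finset.Ico s (K+1),
        (T k - T ((k:ℝ)+1)) * G (x - (k:ℝ) - 1)
          ≤ ∫ y in ((k:ℝ)-1)..(k:ℝ), G ((x-2) - y) * G y := by
      intro k hk
      have hf1 : T k - T ((k:ℝ)+1) ≤ G k := by
        have := hTG (k:ℝ)
        have := hTpos ((k:ℝ)+1)
        linarith
      have hstep1 : (T k - T ((k:ℝ)+1)) * G (x - (k:ℝ) - 1)
          ≤ (∫ y in ((k:ℝ)-1)..(k:ℝ), G y) * G (x - (k:ℝ) - 1) :=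
        mul_le_mul_of_nonneg_right (le_trans hf1 (hunit _)) (hGpos _).le
      have hstep2 : (∫ y in ((k:ℝ)-1)..(k:ℝ), G y) * G (x - (k:ℝ) - 1)
          = ∫ y in ((k:ℝ)-1)..(k:ℝ), G (x - (k:ℝ) - 1) * G y := by
        rw [intervalIntegral.integral_const_mul]
        ring
      have hstep3 : (∫ y in ((k:ℝ)-1)..(k:ℝ), G (x - (k:ℝ) - 1) * G y)
          ≤ ∫ y in ((k:ℝ)-1)..(k:ℝ), G ((x-2) - y) * G y := by
        apply intervalIntegral.integral_mono_on (by linarith : (k:ℝ)-1 ≤ (k:ℝ))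
          (SP.intInt_of_bdd (measurable_const.mul hGmeas)
            (fun y => mul_nonneg (hGpos _).le (hGpos _).le)
            (fun y => mul_le_one₀ (hG1 _) (hGpos _).le (hG1 _)) _ _)
          (hGconvInt (x-2) _ _)
        intro y hy
        apply mul_le_mul_of_nonneg_right _ (hGpos _).le
        apply hGanti
        linarith [hy.1]
      linarith
    -- sum of adjacent interval integrals
    set N := K + 1 - s with hN
    set a : ℕ → ℝ := fun i => (s:ℝ) - 1 + i with ha
    have hsum_eq : ∑ k ∈ Finset.Ico s (K+1), ∫ y in ((k:ℝ)-1)..(k:ℝ), G ((x-2) - y) * G y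
        = ∑ i ∈ Finset.range N, ∫ y in (a i)..(a (i+1)), G ((x-2) - y) * G y := by
      rw [Finset.sum_Ico_eq_sum_range]
      apply Finset.sum_congr rfl
      intro i _
      have e1 : ((s+i:ℕ):ℝ) - 1 = a i := by simp only [ha]; push_cast; ring
      have e2 : ((s+i:ℕ):ℝ) = a (i+1) := by simp only [ha]; push_cast; ring
      rw [e1, e2]
    have hadj : ∑ i ∈ Finset.range N, ∫ y in (a i)..(a (i+1)), G ((x-2) - y) * G y
        = ∫ y in (a 0)..(a N), G ((x-2) - y) * G y :=
      intervalIntegral.sum_integral_adjacent_intervals (fun i _ => hGconvInt (x-2) _ _)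
    have haN : a N ≤ x - (s:ℝ) + 1 := by
      rcases le_or_gt s (K+1) with hsK | hsK
      · have : (N:ℝ) = (K:ℝ) + 1 - (s:ℝ) := by
          rw [hN]; push_cast [Nat.cast_sub hsK]; ring
        simp only [ha, this]
        linarith
      · have : N = 0 := by omega
        simp only [ha, this, Nat.cast_zero, add_zero]
        linarith
    have haN0 : a 0 ≤ a N := by
      simp only [ha, Nat.cast_zero, add_zero]
      have : (0:ℝ) ≤ (N:ℝ) := Nat.cast_nonneg N
      linarith
    -- extend the integral to the final range
    have hext : ∫ y in (a 0)..(a N), G ((x-2) - y) * G y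
        ≤ ∫ y in ((s:ℝ)-3)..((x-2) - ((s:ℝ)-3)), G ((x-2) - y) * G y := by
      have e3 : (x-2) - ((s:ℝ)-3) = x - (s:ℝ) + 1 := by ring
      rw [e3]
      have hle1 : (s:ℝ)-3 ≤ a 0 := by simp only [ha]; push_cast; linarith
      have split1 := intervalIntegral.integral_add_adjacent_intervals
        (hGconvInt (x-2) ((s:ℝ)-3) (a 0)) (hGconvInt (x-2) (a 0) (a N))
      have split2 := intervalIntegral.integral_add_adjacent_intervals
        (hGconvInt (x-2) ((s:ℝ)-3) (a N)) (hGconvInt (x-2) (a N) (x - (s:ℝ) + 1))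
      have hnn1 : 0 ≤ ∫ y in ((s:ℝ)-3)..(a 0), G ((x-2) - y) * G y :=
        intervalIntegral.integral_nonneg hle1
          (fun y _ => mul_nonneg (hGpos _).le (hGpos _).le)
      have hnn2 : 0 ≤ ∫ y in (a N)..(x - (s:ℝ) + 1), G ((x-2) - y) * G y :=
        intervalIntegral.integral_nonneg haN
          (fun y _ => mul_nonneg (hGpos _).le (hGpos _).le)
      linarith [split1, split2]
    calc ∑ k ∈ Finset.Ico s (K+1), (T k - T ((k:ℝ)+1)) * G (x - (k:ℝ) - 1)
        ≤ ∑ k ∈ Finset.Ico s (K+1), ∫ y in ((k:ℝ)-1)..(k:ℝ), G ((x-2) - y) * G y :=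
          Finset.sum_le_sum hterm
      _ = ∫ y in (a 0)..(a N), G ((x-2) - y) * G y := by rw [hsum_eq, hadj]
      _ ≤ _ := hext
  -- G is long-tailed
  have hGlong : ∀ a : ℝ, 0 < a → Tendsto (fun x => G (x - a) / G x) atTop (nhds 1) :=
    fun a ha => SP.long_of_sstar hGanti hGpos hG1 hGint hGtend ha
  have hnr2 : (2:ℝ) ≤ (n:ℝ) := by exact_mod_cast hn
  -- (★): G is eventually dominated by a multiple of T
  have star : ∀ᶠ x in atTop, G x ≤ (8*(n:ℝ)) * T x := by
    obtain ⟨c₀, hc₀1, hsmall⟩ := SP.conv_tail_small hGanti hGpos hG1 hGint hGtend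
      (1/(2*(n:ℝ))) (by positivity)
    set s : ℕ := ⌈c₀⌉₊ + 4 with hs_def
    have hs4 : 4 ≤ s := by omega
    have hs1 : 1 ≤ s := by omega
    have hsr1 : (1:ℝ) ≤ (s:ℝ) := by exact_mod_cast hs1
    have hsc : c₀ ≤ (s:ℝ) - 3 := by
      have h1 := Nat.le_ceil c₀
      have h2 : ((⌈c₀⌉₊:ℕ):ℝ) + 4 = (s:ℝ) := by rw [hs_def]; push_cast; ring
      linarith
    have htr : Tendsto (fun x : ℝ => x - 2) atTop atTop := by
      have := tendsto_atTop_add_const_right atTop (-2:ℝ) tendsto_id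
      simpa [sub_eq_add_neg] using this
    have hev2 : ∀ᶠ x in atTop,
        (∫ y in ((s:ℝ)-3)..((x-2) - ((s:ℝ)-3)), G ((x-2) - y) * G y)
          ≤ (1/(2*(n:ℝ))) * G (x-2) := htr.eventually (hsmall ((s:ℝ)-3) hsc)
    have hG2 : ∀ᶠ x in atTop, G (x - 2) ≤ (3/2) * G x := by
      filter_upwards [(hGlong 2 two_pos).eventually
        (eventually_le_nhds (by norm_num : (1:ℝ) < 3/2))] with x hx
      rw [div_le_iff₀ (hGpos x)] at hx
      linarith
    have hTev : ∀ᶠ x in atTop, T (x - ((n:ℝ)-1)*(s:ℝ)) ≤ 2 * T x := by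
      have hpos' : (0:ℝ) < ((n:ℝ)-1)*(s:ℝ) := by nlinarith
      filter_upwards [(hlong.2 _ hpos').eventually
        (eventually_le_nhds (by norm_num : (1:ℝ) < 2))] with x hx
      rw [div_le_iff₀ (hTpos x)] at hx
      linarith
    filter_upwards [hev2, hG2, hTev, eventually_gt_atTop ((n:ℝ)*(s:ℝ))] with x h1 h2 h3 h4
    have hA' := stepA s hs1 x h4
    set B := ∑ k ∈ Finset.Ico s (⌊x - ((n:ℝ)-1)*(s:ℝ)⌋₊ + 1),
        (T k - T ((k:ℝ)+1)) * G (x - (k:ℝ) - 1) with hBdef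
    have hB2 : ∑ j ∈ Finset.range n,
        (P ({ω | (s:ℝ) < Y j ω ∧ Y j ω ≤ x - ((n:ℝ)-1)*s}
          ∩ {ω | x - Y j ω < S' j ω})).toReal ≤ (n:ℝ) * B := by
      calc ∑ j ∈ Finset.range n,
          (P ({ω | (s:ℝ) < Y j ω ∧ Y j ω ≤ x - ((n:ℝ)-1)*s}
            ∩ {ω | x - Y j ω < S' j ω})).toReal
          ≤ ∑ _j ∈ Finset.range n, B :=
            Finset.sum_le_sum (fun j hj => stepB s hs1 x j hj)
        _ = (n:ℝ) * B := by
            rw [Finset.sum_const, Finset.card_range, nsmul_eq_mul]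
    have hC' := stepC s hs4 x h4
    have hBint : B ≤ (1/(2*(n:ℝ))) * ((3/2) * G x) := by
      have step1 : B ≤ (1/(2*(n:ℝ))) * G (x-2) := le_trans hC' h1
      have step2 : (1/(2*(n:ℝ))) * G (x-2) ≤ (1/(2*(n:ℝ))) * ((3/2) * G x) :=
        mul_le_mul_of_nonneg_left h2 (by positivity)
      linarith
    have hnB : (n:ℝ) * B ≤ (n:ℝ) * ((1/(2*(n:ℝ))) * ((3/2) * G x)) :=
      mul_le_mul_of_nonneg_left hBint (by positivity)
    have hcalc : (n:ℝ) * ((1/(2*(n:ℝ))) * ((3/2) * G x)) = (3/4) * G x := by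
      have hne : (n:ℝ) ≠ 0 := by positivity
      field_simp
      ring
    have hTterm : (n:ℝ) * T (x - ((n:ℝ)-1)*(s:ℝ)) ≤ (n:ℝ) * (2 * T x) :=
      mul_le_mul_of_nonneg_left h3 (by positivity)
    -- combine
    have hfin : G x ≤ (n:ℝ) * (2 * T x) + (3/4) * G x := by
      rw [hcalc] at hnB
      calc G x ≤ (n:ℝ) * T (x - ((n:ℝ)-1)*s) + ∑ j ∈ Finset.range n,
            (P ({ω | (s:ℝ) < Y j ω ∧ Y j ω ≤ x - ((n:ℝ)-1)*s}
              ∩ {ω | x - Y j ω < S' j ω})).toReal := hA'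
        _ ≤ (n:ℝ) * T (x - ((n:ℝ)-1)*s) + (n:ℝ) * B := by linarith
        _ ≤ (n:ℝ) * (2 * T x) + (3/4) * G x := by linarith
    nlinarith [hTpos x]
  -- integrability of T
  have hTmeas : Measurable T := hTanti.measurable
  have hTint : IntegrableOn T (Ioi 0) volume := by
    apply Integrable.mono' hGint hTmeas.aestronglyMeasurable
    exact ae_of_all _ (fun y => by
      rw [Real.norm_eq_abs, abs_of_nonneg (hT0 y)]
      exact hTG y)
  have hTconvInt : ∀ (c a b : ℝ), IntervalIntegrable (fun y => T (c - y) * T y) volume a b :=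
    fun c a b => SP.intInt_conv hTanti hTpos hT1 c a b
  refine ⟨hTpos, hTint, ?_⟩
  set μT := tailMean T with hμT_def
  have hμTpos : 0 < μT := SP.mean_pos hTanti hTpos hT1 hTint
  rw [Metric.tendsto_atTop]
  intro ε hε
  rw [← eventually_atTop]
  -- lower bound
  have hlow : ∀ᶠ x in atTop,
      2*μT - ε/2 ≤ (∫ y in (0:ℝ)..x, T (x - y) * T y) / T x := by
    have hcomp : Tendsto (fun x : ℝ => ∫ y in (0:ℝ)..(x/2), T y) atTop (nhds μT) :=
      (SP.head_tendsto hTint).comp (tendsto_id.atTop_div_const two_pos)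
    filter_upwards [hcomp.eventually (eventually_ge_nhds (by linarith : μT - ε/4 < μT)),
      eventually_ge_atTop (0:ℝ)] with x hx1 hx0
    rw [le_div_iff₀ (hTpos x)]
    have hsym := SP.conv_sym hTanti hTpos hT1 x
    have hhead := SP.conv_head_lower hTanti hTpos hT1 (c := x/2) (x := x)
      (by linarith) (by linarith)
    have hmul : T x * (μT - ε/4) ≤ T x * ∫ y in (0:ℝ)..(x/2), T y :=
      mul_le_mul_of_nonneg_left hx1 (hTpos x).le
    nlinarith
  -- upper bound
  set C := 8*(n:ℝ) with hCdef
  have hCpos : (0:ℝ) < C := by rw [hCdef]; positivity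
  set δ := ε/(8*(C+1)) with hδdef
  have hδpos : 0 < δ := div_pos hε (by linarith)
  obtain ⟨c₁, hc₁1, hsmallT⟩ := SP.conv_tail_small hGanti hGpos hG1 hGint hGtend δ hδpos
  set ε' := ε/(8*(μT+1)) with hε'def
  have hε'pos : 0 < ε' := div_pos hε (by linarith)
  have hμhead : (∫ y in (0:ℝ)..c₁, T y) ≤ μT := SP.head_le_mean hTpos hTint c₁
  have hc₁pos : (0:ℝ) < c₁ := lt_of_lt_of_le one_pos hc₁1
  have hTlongev : ∀ᶠ x in atTop, T (x - c₁) ≤ (1 + ε') * T x := by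
    filter_upwards [(hlong.2 c₁ hc₁pos).eventually
      (eventually_le_nhds (by linarith : (1:ℝ) < 1 + ε'))] with x hx
    rw [div_le_iff₀ (hTpos x)] at hx
    linarith
  have hup : ∀ᶠ x in atTop,
      (∫ y in (0:ℝ)..x, T (x - y) * T y) / T x ≤ 2*μT + ε/2 := by
    filter_upwards [hsmallT c₁ le_rfl, star, hTlongev, eventually_ge_atTop (2*c₁)]
      with x hG_small hstar hTlong hx2
    have hc₁x : c₁ ≤ x/2 := by linarith
    rw [div_le_iff₀ (hTpos x)]
    have hsym := SP.conv_sym hTanti hTpos hT1 x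
    have hsplit : (∫ y in (0:ℝ)..c₁, T (x - y) * T y)
        + (∫ y in c₁..(x/2), T (x - y) * T y)
        = ∫ y in (0:ℝ)..(x/2), T (x - y) * T y :=
      intervalIntegral.integral_add_adjacent_intervals (hTconvInt x 0 c₁)
        (hTconvInt x c₁ (x/2))
    have hhead : (∫ y in (0:ℝ)..c₁, T (x - y) * T y)
        ≤ T (x - c₁) * ∫ y in (0:ℝ)..c₁, T y :=
      SP.conv_upper hTanti hTpos hT1 hc₁pos.le
    have hmid1 : (∫ y in c₁..(x/2), T (x - y) * T y)
        ≤ ∫ y in c₁..(x/2), G (x - y) * G y := by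
      apply intervalIntegral.integral_mono_on hc₁x (hTconvInt x _ _) (hGconvInt x _ _)
      intro y _
      exact mul_le_mul (hTG _) (hTG _) (hT0 _) (hGpos _).le
    have hmid2 : (∫ y in c₁..(x/2), G (x - y) * G y)
        ≤ ∫ y in c₁..(x - c₁), G (x - y) * G y := by
      have hadj : (∫ y in c₁..(x/2), G (x - y) * G y)
          + (∫ y in (x/2)..(x - c₁), G (x - y) * G y)
          = ∫ y in c₁..(x - c₁), G (x - y) * G y :=
        intervalIntegral.integral_add_adjacent_intervals (hGconvInt x _ _) (hGconvInt x _ _)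
      have hnn : 0 ≤ ∫ y in (x/2)..(x - c₁), G (x - y) * G y :=
        intervalIntegral.integral_nonneg (by linarith)
          (fun y _ => mul_nonneg (hGpos _).le (hGpos _).le)
      linarith
    have hmid4 : δ * G x ≤ δ * (C * T x) := by
      apply mul_le_mul_of_nonneg_left _ hδpos.le
      rw [hCdef]
      exact hstar
    have hδC : δ * (C * T x) ≤ (ε/8) * T x := by
      have h8 : δ * (8*(C+1)) = ε := by
        rw [hδdef]
        exact div_mul_cancel₀ ε (ne_of_gt (by linarith))
      nlinarith [hTpos x, hδpos.le]
    have hheadfin : T (x - c₁) * (∫ y in (0:ℝ)..c₁, T y) ≤ (1 + ε') * T x * μT :=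
      mul_le_mul hTlong hμhead
        (intervalIntegral.integral_nonneg hc₁pos.le (fun y _ => hT0 y))
        (mul_nonneg (by linarith) (hTpos x).le)
    have hε'μ : (1 + ε') * T x * μT ≤ T x * μT + (ε/8) * T x := by
      have h8 : ε' * (8*(μT+1)) = ε := by
        rw [hε'def]
        exact div_mul_cancel₀ ε (ne_of_gt (by linarith))
      nlinarith [hTpos x, hε'pos.le, hμTpos.le]
    have hgoal : (2*μT + ε/2) * T x = 2*(T x * μT) + (ε/4)*T x + (ε/4)*T x := by ring
    rw [hgoal]
    have hI : (∫ y in (0:ℝ)..x, T (x - y) * T y)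
        = 2 * ((∫ y in (0:ℝ)..c₁, T (x - y) * T y)
          + (∫ y in c₁..(x/2), T (x - y) * T y)) := by
      rw [hsplit, ← hsym]
    linarith
  filter_upwards [hlow, hup] with x h1 h2
  rw [Real.dist_eq]
  have habs : |(∫ y in (0:ℝ)..x, T (x - y) * T y) / T x - 2*μT| ≤ ε/2 :=
    abs_le.mpr ⟨by linarith, by linarith⟩
  calc |(∫ y in (0:ℝ)..x, T (x - y) * T y) / T x - 2*μT| ≤ ε/2 := habs
    _ < ε := by linarith
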